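/- arXiv:2001.06465 — 2 statements merged into one kernel-verified Lean document; each statement's English description precedes it below -/
import Mathlib

section
/- Let K be a Markov kernel on a measurable space Θ that is reversible with respect to a probability measure π. Let M be uniform on {1,...,L}, let θ_M ~ π, and conditionally on M = m construct θ_{m-1},...,θ_1 by successive backward draws θ_{i} ~ K(θ_{i+1},·) and θ_{m+1},...,θ_L by forward draws θ_{j} ~ K(θ_{j-1},·). Then the joint distribution of (θ_1,...,θ_L) does not depend on M; i.e., (θ_1,...,θ_L) is independent of M. -/
open MeasureTheory ProbabilityTheory

/-- The law of `n` successive draws of a Markov kernel `K` started from the point `θ`: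
component `0` is the first draw, component `i+1` is drawn from `K` at component `i`. -/
noncomputable def chainFrom {Θ : Type*} [MeasurableSpace Θ]
    (K : Kernel Θ Θ) : (n : ℕ) → Θ → Measure (Fin n → Θ)
  | 0, _ => Measure.dirac (fun i => i.elim0)
  | n + 1, θ => (K θ).bind (fun θ1 => (chainFrom K n θ1).map (Fin.cons θ1))

/-- Assemble the trajectory `(θ_0, ..., θ_{L-1})` from the middle point `θ` at
position `m`, the backward draws `b` (with `b 0` at position `m-1`, `b 1` at
position `m-2`, ...) and the forward draws `f` (with `f 0` at position `m+1`, ...). -/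
def assembleTraj {Θ : Type*} (L : ℕ) (m : Fin L) (θ : Θ)
    (b : Fin (m : ℕ) → Θ) (f : Fin (L - 1 - (m : ℕ)) → Θ) : Fin L → Θ :=
  fun i =>
    if h : (i : ℕ) < (m : ℕ) then b ⟨(m : ℕ) - 1 - (i : ℕ), by omega⟩
    else if h' : (i : ℕ) = (m : ℕ) then θ
    else f ⟨(i : ℕ) - (m : ℕ) - 1, by omega⟩

/-- The joint law of the trajectory `(θ_0, ..., θ_{L-1})` constructed by placing an
exact `π`-sample at position `m`, running the chain backwards `m` steps and
forwards `L - 1 - m` steps with the kernel `K`. -/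
noncomputable def backForthLaw {Θ : Type*} [MeasurableSpace Θ]
    (K : Kernel Θ Θ) (π : Measure Θ) (L : ℕ) (m : Fin L) : Measure (Fin L → Θ) :=
  π.bind (fun θ =>
    ((chainFrom K (m : ℕ) θ).prod (chainFrom K (L - 1 - (m : ℕ)) θ)).map
      (fun p => assembleTraj L m θ p.1 p.2))

section
variable {Θ : Type*} [MeasurableSpace Θ]

lemma measurable_finCons {n : ℕ} :
    Measurable (fun p : Θ × (Fin n → Θ) => (Fin.cons p.1 p.2 : Fin (n+1) → Θ)) := by
  apply measurable_pi_lambda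
  intro i
  refine Fin.cases ?_ ?_ i
  · simpa using measurable_fst
  · intro j; simp only [Fin.cons_succ]; exact (measurable_pi_apply j).comp measurable_snd

lemma cons_mk_zero {n : ℕ} (x : Θ) (b : Fin n → Θ) (j : ℕ) (hj : j < n + 1) (h0 : j = 0) :
    (Fin.cons x b : Fin (n+1) → Θ) ⟨j, hj⟩ = x := by
  have h : (⟨j, hj⟩ : Fin (n+1)) = 0 := by subst h0; rfl
  rw [h, Fin.cons_zero]

lemma cons_mk_pos {n : ℕ} (x : Θ) (b : Fin n → Θ) (j : ℕ) (hj : j < n + 1) (h0 : 0 < j) :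
    (Fin.cons x b : Fin (n+1) → Θ) ⟨j, hj⟩ = b ⟨j - 1, by omega⟩ := by
  have h : (⟨j, hj⟩ : Fin (n+1)) = Fin.succ ⟨j - 1, by omega⟩ := by
    apply Fin.ext; simp; omega
  rw [h, Fin.cons_succ]

end

section
set_option linter.unusedSectionVars false
variable {Θ : Type*} [MeasurableSpace Θ]

noncomputable def CK (K : Kernel Θ Θ) : (n : ℕ) → Kernel Θ (Fin n → Θ)
  | 0 => Kernel.deterministic (fun _ => fun i => i.elim0) measurable_const
  | n + 1 => (Kernel.map (Kernel.id ×ₖ CK K n) (fun p => Fin.cons p.1 p.2)) ∘ₖ K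

instance CK_markov (K : Kernel Θ Θ) [IsMarkovKernel K] : ∀ n, IsMarkovKernel (CK K n)
  | 0 => by unfold CK; infer_instance
  | n + 1 => by
    have := CK_markov K n
    have := Kernel.IsMarkovKernel.map (Kernel.id ×ₖ CK K n)
      (measurable_finCons (Θ := Θ) (n := n))
    unfold CK; infer_instance

lemma mixMap_apply {α γ : Type*} [MeasurableSpace α] [MeasurableSpace γ]
    {β : Type*} [MeasurableSpace β]
    (κ : Kernel α β) [IsSFiniteKernel κ] {g : α × β → γ} (hg : Measurable g) (a : α) :
    (Kernel.map (Kernel.id ×ₖ κ) g) a = (κ a).map (fun b => g (a, b)) := by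
  rw [Kernel.map_apply _ hg, Kernel.prod_apply, Kernel.id_apply, Measure.dirac_prod,
      Measure.map_map hg measurable_prodMk_left]
  rfl

lemma CK_succ_apply (K : Kernel Θ Θ) [IsMarkovKernel K] (n : ℕ) (θ : Θ) :
    CK K (n+1) θ = (K θ).bind (fun θ1 => (CK K n θ1).map (Fin.cons θ1)) := by
  rw [show CK K (n+1) = (Kernel.map (Kernel.id ×ₖ CK K n) (fun p => Fin.cons p.1 p.2)) ∘ₖ K
      from rfl, Kernel.comp_apply]
  exact congrArg _ (funext fun θ1 => mixMap_apply _ measurable_finCons θ1)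

lemma measurable_CKstep (K : Kernel Θ Θ) [IsMarkovKernel K] (n : ℕ) :
    Measurable (fun θ1 : Θ => ((CK K n θ1).map (Fin.cons θ1) : Measure (Fin (n+1) → Θ))) := by
  have h : (fun θ1 : Θ => ((CK K n θ1).map (Fin.cons θ1) : Measure (Fin (n+1) → Θ)))
      = ⇑(Kernel.map (Kernel.id ×ₖ CK K n) (fun p => Fin.cons p.1 p.2)) := by
    funext θ1
    exact (mixMap_apply (CK K n) (measurable_finCons (Θ := Θ) (n := n)) θ1).symm
  rw [h]; exact Kernel.measurable _

lemma CK_cast (K : Kernel Θ Θ) [IsMarkovKernel K] {n n' : ℕ} (hn : n = n' + 1) (θ : Θ) :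
    CK K n θ = ((K θ).bind (fun θ2 => (CK K n' θ2).map (Fin.cons θ2))).map
      (fun g => g ∘ Fin.cast hn) := by
  subst hn
  rw [CK_succ_apply]
  have h : (fun g : Fin (n'+1) → Θ => g ∘ Fin.cast rfl) = id := by funext g; rfl
  rw [h, Measure.map_id]

end

section
set_option linter.unusedSectionVars false
variable {Θ : Type*} [MeasurableSpace Θ]

lemma chainFrom_eq (K : Kernel Θ Θ) [IsMarkovKernel K] : ∀ n (θ : Θ), chainFrom K n θ = CK K n θ
  | 0, θ => by
    rw [show chainFrom K 0 θ = Measure.dirac (fun i => i.elim0) from rfl,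
      show CK K 0 = Kernel.deterministic (fun _ => fun i => i.elim0) measurable_const from rfl,
      Kernel.deterministic_apply]
  | n + 1, θ => by
    rw [show chainFrom K (n+1) θ
        = (K θ).bind (fun θ1 => (chainFrom K n θ1).map (Fin.cons θ1)) from rfl,
      CK_succ_apply]
    exact congrArg _ (funext fun θ1 => by rw [chainFrom_eq K n θ1])

end

section
set_option linter.unusedSectionVars false
variable {Θ : Type*} [MeasurableSpace Θ]

lemma bind_step_prod_map {β γ : Type*} [MeasurableSpace β] [MeasurableSpace γ]
    (K : Kernel Θ Θ) [IsMarkovKernel K] (n : ℕ) (ρ : Measure Θ)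
    (ν : Measure β) [SFinite ν]
    {g : (Fin (n+1) → Θ) × β → γ} (hg : Measurable g) :
    ((ρ.bind (fun θ => (CK K n θ).map (Fin.cons θ))).prod ν).map g
      = ρ.bind (fun θ => ((CK K n θ).prod ν).map (fun r => g (Fin.cons θ r.1, r.2))) := by
  have hmk : ∀ θ : Θ, Measurable (fun r : (Fin n → Θ) × β => g (Fin.cons θ r.1, r.2)) := fun θ =>
    hg.comp ((measurable_finCons.comp (measurable_const.prodMk measurable_fst)).prodMk
      measurable_snd)
  have hkq : Measurable (fun q : Θ × ((Fin n → Θ) × β) => g (Fin.cons q.1 q.2.1, q.2.2)) :=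
    hg.comp ((measurable_finCons.comp (measurable_fst.prodMk
      (measurable_fst.comp measurable_snd))).prodMk (measurable_snd.comp measurable_snd))
  have hF : (fun θ : Θ => ((CK K n θ).prod ν).map (fun r => g (Fin.cons θ r.1, r.2)))
      = ⇑(Kernel.map (Kernel.id ×ₖ (CK K n ×ₖ Kernel.const Θ ν))
          (fun q => g (Fin.cons q.1 q.2.1, q.2.2))) := by
    funext θ
    rw [mixMap_apply _ hkq θ, Kernel.prod_apply, Kernel.const_apply]
  ext s hs
  rw [Measure.map_apply hg hs, Measure.prod_apply (hg hs),
    Measure.lintegral_bind (measurable_CKstep K n).aemeasurable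
      (measurable_measure_prodMk_left (hg hs)).aemeasurable,
    Measure.bind_apply hs (by rw [hF]; exact (Kernel.measurable _).aemeasurable)]
  refine lintegral_congr fun θ => ?_
  have hconsθ : Measurable (fun b : Fin n → Θ => (Fin.cons θ b : Fin (n+1) → Θ)) :=
    measurable_finCons.comp (measurable_const.prodMk measurable_id)
  rw [lintegral_map (measurable_measure_prodMk_left (hg hs)) hconsθ,
    Measure.map_apply (hmk θ) hs, Measure.prod_apply ((hmk θ) hs)]
  rfl

end

section
set_option linter.unusedSectionVars false
variable {Θ : Type*} [MeasurableSpace Θ]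

def A2fun (L k : ℕ) (hk : k + 1 < L) (θ θ1 : Θ)
    (r : (Fin k → Θ) × (Fin (L - 1 - (k+1)) → Θ)) : Fin L → Θ :=
  fun i =>
    if h : (i : ℕ) < k then r.1 ⟨k - 1 - (i : ℕ), by omega⟩
    else if h' : (i : ℕ) = k then θ1
    else if h'' : (i : ℕ) = k + 1 then θ
    else r.2 ⟨(i : ℕ) - (k+1) - 1, by omega⟩

lemma measurable_A2fun (L k : ℕ) (hk : k + 1 < L) :
    Measurable (fun q : (Θ × Θ) × ((Fin k → Θ) × (Fin (L - 1 - (k+1)) → Θ)) =>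
      A2fun L k hk q.1.1 q.1.2 q.2) := by
  apply measurable_pi_lambda
  intro i
  simp only [A2fun]
  by_cases h : (i : ℕ) < k
  · simp only [dif_pos h]
    exact (measurable_pi_apply _).comp (measurable_fst.comp measurable_snd)
  · simp only [dif_neg h]
    by_cases h' : (i : ℕ) = k
    · simp only [dif_pos h']
      exact measurable_snd.comp measurable_fst
    · simp only [dif_neg h']
      by_cases h'' : (i : ℕ) = k + 1
      · simp only [dif_pos h'']
        exact measurable_fst.comp measurable_fst
      · simp only [dif_neg h'']
        exact (measurable_pi_apply _).comp (measurable_snd.comp measurable_snd)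

lemma measurable_assembleTraj (L : ℕ) (m : Fin L) :
    Measurable (fun q : Θ × ((Fin (m : ℕ) → Θ) × (Fin (L - 1 - (m : ℕ)) → Θ)) =>
      assembleTraj L m q.1 q.2.1 q.2.2) := by
  apply measurable_pi_lambda
  intro i
  simp only [assembleTraj]
  by_cases h : (i : ℕ) < (m : ℕ)
  · simp only [dif_pos h]
    exact (measurable_pi_apply _).comp (measurable_fst.comp measurable_snd)
  · simp only [dif_neg h]
    by_cases h' : (i : ℕ) = (m : ℕ)
    · simp only [dif_pos h']
      exact measurable_fst
    · simp only [dif_neg h']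
      exact (measurable_pi_apply _).comp (measurable_snd.comp measurable_snd)

noncomputable def BFK (K : Kernel Θ Θ) (L : ℕ) (m : Fin L) : Kernel Θ (Fin L → Θ) :=
  Kernel.map (Kernel.id ×ₖ (CK K (m : ℕ) ×ₖ CK K (L - 1 - (m : ℕ))))
    (fun q => assembleTraj L m q.1 q.2.1 q.2.2)

lemma BFK_apply (K : Kernel Θ Θ) [IsMarkovKernel K] (L : ℕ) (m : Fin L) (θ : Θ) :
    BFK K L m θ = ((CK K (m : ℕ) θ).prod (CK K (L - 1 - (m : ℕ)) θ)).map
      (fun r => assembleTraj L m θ r.1 r.2) := by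
  rw [BFK, mixMap_apply _ (measurable_assembleTraj L m), Kernel.prod_apply]

lemma backForthLaw_eq (K : Kernel Θ Θ) [IsMarkovKernel K] (π : Measure Θ) (L : ℕ) (m : Fin L) :
    backForthLaw K π L m = π.bind ⇑(BFK K L m) := by
  rw [backForthLaw]
  exact congrArg _ (funext fun θ => by rw [chainFrom_eq, chainFrom_eq, BFK_apply])

noncomputable def kbig (K : Kernel Θ Θ) (L k : ℕ) (hk : k + 1 < L) :
    Kernel (Θ × Θ) (Fin L → Θ) :=
  Kernel.map (Kernel.id ×ₖ (((CK K k).comap Prod.snd measurable_snd) ×ₖ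
      ((CK K (L - 1 - (k+1))).comap Prod.fst measurable_fst)))
    (fun q => A2fun L k hk q.1.1 q.1.2 q.2)

lemma kbig_apply (K : Kernel Θ Θ) [IsMarkovKernel K] (L k : ℕ) (hk : k + 1 < L) (θ θ1 : Θ) :
    kbig K L k hk (θ, θ1) = ((CK K k θ1).prod (CK K (L - 1 - (k+1)) θ)).map
      (fun r => A2fun L k hk θ θ1 r) := by
  rw [kbig, mixMap_apply _ (measurable_A2fun L k hk), Kernel.prod_apply,
    Kernel.comap_apply, Kernel.comap_apply]

end

section
set_option linter.unusedSectionVars false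
variable {Θ : Type*} [MeasurableSpace Θ]

lemma fact1 (L k : ℕ) (hk : k + 1 < L) (θ θ1 : Θ) (b : Fin k → Θ)
    (f : Fin (L - 1 - (k+1)) → Θ) :
    assembleTraj L ⟨k+1, hk⟩ θ (Fin.cons θ1 b) f = A2fun L k hk θ θ1 (b, f) := by
  funext i
  simp only [assembleTraj, A2fun, Fin.val_mk]
  by_cases h1 : (i : ℕ) < k
  · rw [dif_pos (show (i : ℕ) < k + 1 by omega), dif_pos h1,
      cons_mk_pos _ _ _ _ (by omega)]
    exact congrArg _ (Fin.ext (by simp only [Fin.val_mk]; omega))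
  · by_cases h2 : (i : ℕ) = k
    · rw [dif_pos (show (i : ℕ) < k + 1 by omega), dif_neg h1,
        dif_pos h2, cons_mk_zero _ _ _ _ (by omega)]
    · by_cases h3 : (i : ℕ) = k + 1
      · rw [dif_neg (show ¬ (i : ℕ) < k + 1 by omega), dif_pos h3,
          dif_neg h1, dif_neg h2, dif_pos h3]
      · rw [dif_neg (show ¬ (i : ℕ) < k + 1 by omega), dif_neg h3,
          dif_neg h1, dif_neg h2, dif_neg h3]

set_option maxHeartbeats 1000000 in
lemma fact2 (L k : ℕ) (hk : k + 1 < L) (hkL : k < L)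
    (hn : L - 1 - k = (L - 1 - (k+1)) + 1)
    (θ θ1 : Θ) (b : Fin k → Θ) (f : Fin (L - 1 - (k+1)) → Θ) :
    assembleTraj L ⟨k, hkL⟩ θ1 b ((Fin.cons θ f) ∘ Fin.cast hn) = A2fun L k hk θ θ1 (b, f) := by
  funext i
  simp only [assembleTraj, A2fun, Function.comp, Fin.val_mk]
  by_cases h1 : (i : ℕ) < k
  · rw [dif_pos h1, dif_pos h1]
  · by_cases h2 : (i : ℕ) = k
    · rw [dif_neg h1, dif_pos h2, dif_neg h1, dif_pos h2]
    · rw [dif_neg h1, dif_neg h2, dif_neg h1, dif_neg h2]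
      have hcast : Fin.cast hn ⟨(i : ℕ) - k - 1, by omega⟩
          = (⟨(i : ℕ) - k - 1, by omega⟩ : Fin ((L - 1 - (k+1)) + 1)) := rfl
      rw [hcast]
      by_cases h3 : (i : ℕ) = k + 1
      · rw [cons_mk_zero _ _ _ _ (by omega), dif_pos h3]
      · rw [cons_mk_pos _ _ _ _ (by omega), dif_neg h3]
        exact congrArg _ (Fin.ext (by simp only [Fin.val_mk]; omega))

end

section
set_option linter.unusedSectionVars false
variable {Θ : Type*} [MeasurableSpace Θ]

lemma claimA (K : Kernel Θ Θ) [IsMarkovKernel K] (L k : ℕ) (hk : k + 1 < L) (θ : Θ) :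
    BFK K L ⟨k+1, hk⟩ θ = (K θ).bind (fun θ1 => kbig K L k hk (θ, θ1)) := by
  rw [BFK_apply]
  simp only [Fin.val_mk]
  rw [CK_succ_apply]
  have hg : Measurable (fun r : (Fin (k+1) → Θ) × (Fin (L - 1 - (k+1)) → Θ) =>
      assembleTraj L ⟨k+1, hk⟩ θ r.1 r.2) :=
    (measurable_assembleTraj L ⟨k+1, hk⟩).comp (measurable_const.prodMk measurable_id)
  rw [bind_step_prod_map K k (K θ) (CK K (L - 1 - (k+1)) θ) hg]
  refine congrArg _ (funext fun θ1 => ?_)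
  rw [kbig_apply]
  congr 1
  funext r
  exact fact1 L k hk θ θ1 r.1 r.2

lemma claimB (K : Kernel Θ Θ) [IsMarkovKernel K] (L k : ℕ) (hk : k + 1 < L) (θ1 : Θ) :
    BFK K L ⟨k, by omega⟩ θ1 = (K θ1).bind (fun θ => kbig K L k hk (θ, θ1)) := by
  have hn : L - 1 - k = (L - 1 - (k+1)) + 1 := by omega
  rw [BFK_apply]
  simp only [Fin.val_mk]
  have hgB : Measurable (fun r : (Fin k → Θ) × (Fin (L - 1 - k) → Θ) =>
      assembleTraj L ⟨k, by omega⟩ θ1 r.1 r.2) :=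
    (measurable_assembleTraj L ⟨k, by omega⟩).comp (measurable_const.prodMk measurable_id)
  have hcastcomp : Measurable (fun gg : Fin ((L - 1 - (k+1)) + 1) → Θ => gg ∘ Fin.cast hn) :=
    measurable_pi_lambda _ fun j => measurable_pi_apply _
  haveI hP : IsProbabilityMeasure
      ((K θ1).bind (fun θ2 => ((CK K (L - 1 - (k+1)) θ2).map (Fin.cons θ2)
        : Measure (Fin ((L - 1 - (k+1)) + 1) → Θ)))) := by
    rw [← CK_succ_apply]; infer_instance
  rw [← Measure.prod_swap, Measure.map_map hgB measurable_swap, CK_cast K hn θ1,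
    show CK K k θ1 = (CK K k θ1).map id from Measure.map_id.symm,
    Measure.map_prod_map _ _ hcastcomp measurable_id,
    Measure.map_map (hgB.comp measurable_swap) (hcastcomp.prodMap measurable_id),
    bind_step_prod_map K (L - 1 - (k+1)) (K θ1) (CK K k θ1)
      ((hgB.comp measurable_swap).comp (hcastcomp.prodMap measurable_id))]
  refine congrArg _ (funext fun θ => ?_)
  rw [kbig_apply]
  have hA2 : Measurable (fun r : (Fin k → Θ) × (Fin (L - 1 - (k+1)) → Θ) =>
      A2fun L k hk θ θ1 r) :=
    (measurable_A2fun L k hk).comp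
      ((measurable_const : Measurable fun _ : (Fin k → Θ) × (Fin (L - 1 - (k+1)) → Θ) =>
        (θ, θ1)).prodMk measurable_id)
  have hfun : (fun r : (Fin (L - 1 - (k+1)) → Θ) × (Fin k → Θ) =>
        (((fun r : (Fin k → Θ) × (Fin (L - 1 - k) → Θ) =>
            assembleTraj L ⟨k, by omega⟩ θ1 r.1 r.2) ∘ Prod.swap) ∘
          Prod.map (fun gg : Fin ((L - 1 - (k+1)) + 1) → Θ => gg ∘ Fin.cast hn) id)
          (Fin.cons θ r.1, r.2))
      = (fun r : (Fin k → Θ) × (Fin (L - 1 - (k+1)) → Θ) => A2fun L k hk θ θ1 r) ∘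
          Prod.swap := by
    funext r
    exact fact2 L k hk (by omega) hn θ θ1 r.2 r.1
  rw [hfun, ← Measure.map_map hA2 measurable_swap, Measure.prod_swap]

end

section
set_option linter.unusedSectionVars false
variable {Θ : Type*} [MeasurableSpace Θ]

lemma adjacent_step (K : Kernel Θ Θ) [IsMarkovKernel K]
    (π : Measure Θ) [IsProbabilityMeasure π]
    (hrev : π ⊗ₘ K = (π ⊗ₘ K).map Prod.swap)
    (L k : ℕ) (hk : k + 1 < L) :
    backForthLaw K π L ⟨k+1, hk⟩ = backForthLaw K π L ⟨k, by omega⟩ := by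
  ext s hs
  rw [backForthLaw_eq, backForthLaw_eq, Measure.bind_apply hs (Kernel.measurable _).aemeasurable,
    Measure.bind_apply hs (Kernel.measurable _).aemeasurable]
  have hκ : Measurable fun p : Θ × Θ => kbig K L k hk p s := Kernel.measurable_coe _ hs
  calc ∫⁻ θ, BFK K L ⟨k+1, hk⟩ θ s ∂π
      = ∫⁻ θ, ∫⁻ θ1, kbig K L k hk (θ, θ1) s ∂K θ ∂π := by
        refine lintegral_congr fun θ => ?_
        rw [claimA K L k hk θ,
          Measure.bind_apply hs (show Measurable fun θ1 : Θ => kbig K L k hk (θ, θ1) from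
            (kbig K L k hk).measurable.comp measurable_prodMk_left).aemeasurable]
    _ = ∫⁻ p, kbig K L k hk p s ∂(π ⊗ₘ K) := (Measure.lintegral_compProd hκ).symm
    _ = ∫⁻ p, kbig K L k hk p s ∂((π ⊗ₘ K).map Prod.swap) := by rw [← hrev]
    _ = ∫⁻ p, kbig K L k hk (p.2, p.1) s ∂(π ⊗ₘ K) := by
        rw [lintegral_map hκ measurable_swap]
        rfl
    _ = ∫⁻ θ1, ∫⁻ θ, kbig K L k hk (θ, θ1) s ∂K θ1 ∂π :=
        Measure.lintegral_compProd (hκ.comp measurable_swap)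
    _ = ∫⁻ θ1, BFK K L ⟨k, by omega⟩ θ1 s ∂π := by
        refine lintegral_congr fun θ1 => ?_
        rw [claimB K L k hk θ1,
          Measure.bind_apply hs (show Measurable fun θ : Θ => kbig K L k hk (θ, θ1) from
            (kbig K L k hk).measurable.comp measurable_prodMk_right).aemeasurable]

end

/-- If the Markov kernel `K` is reversible with respect to the probability measure `π`
(detailed balance: `π(dθ)K(θ,dθ') = π(dθ')K(θ',dθ)`), then the joint distribution of
the trajectory `(θ_1,...,θ_L)` built from a uniformly chosen starting index `M = m`
does not depend on `m`; i.e. the trajectory is independent of `M`. -/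
theorem backForthLaw_indep_of_index
    {Θ : Type*} [MeasurableSpace Θ]
    (K : Kernel Θ Θ) [IsMarkovKernel K]
    (π : Measure Θ) [IsProbabilityMeasure π]
    (hrev : π ⊗ₘ K = (π ⊗ₘ K).map Prod.swap)
    (L : ℕ) (hL : 0 < L) :
    ∀ m m' : Fin L, backForthLaw K π L m = backForthLaw K π L m' := by
  have H : ∀ j (h : j < L), backForthLaw K π L ⟨j, h⟩ = backForthLaw K π L ⟨0, hL⟩ := by
    intro j
    induction j with
    | zero => intro h; rfl
    | succ n ih =>
      intro h
      rw [adjacent_step K π hrev L n h]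
      exact ih (by omega)
  intro m m'
  exact (H m.1 m.2).trans (H m'.1 m'.2).symm
end

section
/- Consider the sequential test: set β_1 = α/k and γ = β_1^{1/k}; at step i = 1,...,k, observe a d-variate p-value vector p^{(i)}, set q_i = d · min_j p^{(i)}_j; return 'fail' if q_i ≤ β_i; stop and return 'OK' if q_i > γ + β_i; otherwise set β_{i+1} = β_i/γ and continue (returning 'OK' if step k completes without failure). Suppose p^{(1)},...,p^{(k)} are independent d-variate random vectors in [0,1]^d with P(p^{(i)}_j ≤ p) ≤ p for all p ∈ [0,1], all i, j. Then P(fail) ≤ α. -/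
open MeasureTheory ProbabilityTheory

/-- Step `i` (0-indexed) of the sequential test is reached iff at every earlier step `j`
the test continued, i.e. `β_j < q_j ≤ γ + β_j`. -/
def stepReached {Ω : Type*} (k : ℕ) (q : Fin k → Ω → ℝ) (β : ℕ → ℝ) (γ : ℝ)
    (i : Fin k) (ω : Ω) : Prop :=
  ∀ j : Fin k, j < i → β j < q j ω ∧ q j ω ≤ γ + β j

/-- The sequential test fails iff some step `i` is reached and `q_i ≤ β_i` there. -/
def seqFail {Ω : Type*} (k : ℕ) (q : Fin k → Ω → ℝ) (β : ℕ → ℝ) (γ : ℝ) : Set Ω :=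
  {ω | ∃ i : Fin k, stepReached k q β γ i ω ∧ q i ω ≤ β i}

lemma seq_arith (β : ℕ → ℝ) (γ : ℝ) (hγ : 0 < γ)
    (hrec : ∀ m, γ * β (m+1) = β m)
    (a b : ℕ → ℝ) (ha0 : ∀ m, 0 ≤ a m) (hb0 : ∀ m, 0 ≤ b m)
    (haβ : ∀ m, a m ≤ β m) (hab1 : ∀ m, a m + b m ≤ 1)
    (habγ : ∀ m, a m + b m ≤ γ + β m) :
    ∀ n m, (∑ i ∈ Finset.range n, a (m+i) * ∏ j ∈ Finset.range i, b (m+j)) ≤ n * β m ∧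
      (∑ i ∈ Finset.range n, a (m+i) * ∏ j ∈ Finset.range i, b (m+j)) ≤ 1 := by
  intro n
  induction n with
  | zero => intro m; simp
  | succ n ih =>
    intro m
    set T : ℝ := ∑ i ∈ Finset.range n, a (m+1+i) * ∏ j ∈ Finset.range i, b (m+1+j) with hT
    have hsplit : (∑ i ∈ Finset.range (n+1), a (m+i) * ∏ j ∈ Finset.range i, b (m+j))
        = a m + b m * T := by
      rw [Finset.sum_range_succ' (fun i => a (m+i) * ∏ j ∈ Finset.range i, b (m+j)) n]
      simp only [add_zero, Finset.range_zero, Finset.prod_empty, mul_one]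
      rw [Finset.mul_sum, add_comm]
      congr 1
      refine Finset.sum_congr rfl fun i _ => ?_
      rw [Finset.prod_range_succ' (fun j => b (m+j)) i, add_zero]
      rw [show m + (i+1) = m + 1 + i from by omega,
        Finset.prod_congr rfl (fun j (_ : j ∈ Finset.range i) =>
          by rw [show m + (j+1) = m + 1 + j from by omega])]
      ring
    have hT0 : 0 ≤ T := Finset.sum_nonneg fun i _ =>
      mul_nonneg (ha0 _) (Finset.prod_nonneg fun j _ => hb0 _)
    obtain ⟨hTβ, hT1⟩ := ih (m+1)
    rw [hsplit]
    constructor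
    · have h1 : a m + b m * T ≤ β m + γ * T := by
        nlinarith [mul_nonneg (sub_nonneg.mpr (haβ m)) (sub_nonneg.mpr hT1),
          mul_nonneg (sub_nonneg.mpr (habγ m)) hT0]
      have h2 : γ * T ≤ γ * (n * β (m+1)) := mul_le_mul_of_nonneg_left hTβ hγ.le
      have h3 : γ * (n * β (m+1)) = n * β m := by rw [← hrec m]; ring
      push_cast
      nlinarith
    · nlinarith [mul_le_mul_of_nonneg_left hT1 (hb0 m), hab1 m]

/-- The sequential test of Algorithm 3: with `β_1 = α/k`, `γ = β_1^{1/k}`,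
`β_{i+1} = β_i/γ` and `q_i = d · min_j p^{(i)}_j`, if the p-value vectors
`p^{(1)},...,p^{(k)}` are independent with super-uniform coordinates
(`P(p^{(i)}_j ≤ p) ≤ p` for all `p ∈ [0,1]`) taking values in `[0,1]^d`,
then the probability of returning `fail` is at most `α`. -/
theorem seq_test_size_bound
    {Ω : Type*} [MeasurableSpace Ω] (μ : Measure Ω) [IsProbabilityMeasure μ]
    (α : ℝ) (hα : α ∈ Set.Ioo (0 : ℝ) 1)
    (k : ℕ) (hk : 0 < k) (d : ℕ) (hd : 0 < d)
    (p : Fin k → Fin d → Ω → ℝ)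
    (hmeas : ∀ i j, Measurable (p i j))
    (hrange : ∀ i j ω, p i j ω ∈ Set.Icc (0 : ℝ) 1)
    (hsuper : ∀ i j, ∀ t ∈ Set.Icc (0 : ℝ) 1,
      μ {ω | p i j ω ≤ t} ≤ ENNReal.ofReal t)
    (hindep : iIndepFun
      (fun i ω => fun j => p i j ω) μ)
    (γ : ℝ) (hγ : γ = (α / k) ^ ((1 : ℝ) / k))
    (β : ℕ → ℝ) (hβ : ∀ i, β i = (α / k) / γ ^ i)
    (q : Fin k → Ω → ℝ)
    (hq : ∀ i ω, q i ω = d * ⨅ j : Fin d, p i j ω) :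
    μ (seqFail k q β γ) ≤ ENNReal.ofReal α := by
  obtain ⟨hα0, hα1⟩ := hα
  haveI : Nonempty (Fin d) := ⟨⟨0, hd⟩⟩
  have hk' : (0:ℝ) < k := by exact_mod_cast hk
  have hd' : (0:ℝ) < d := by exact_mod_cast hd
  have hαk : 0 < α / k := div_pos hα0 hk'
  have hγpos : 0 < γ := hγ ▸ Real.rpow_pos_of_pos hαk _
  have hβpos : ∀ m, 0 < β m := fun m => by rw [hβ]; positivity
  have hrec : ∀ m, γ * β (m+1) = β m := by
    intro m
    rw [hβ, hβ, pow_succ]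
    field_simp
  -- the vector map
  set f : Fin k → Ω → (Fin d → ℝ) := fun i ω j => p i j ω with hf
  have hfmeas : ∀ i, Measurable (f i) := fun i => measurable_pi_iff.mpr (hmeas i)
  -- threshold sets in the codomain
  set B : ℝ → Set (Fin d → ℝ) := fun t => {x | (d:ℝ) * ⨅ j, x j ≤ t} with hB
  have hBeq : ∀ t, B t = ⋃ j : Fin d, {x : Fin d → ℝ | x j ≤ t / d} := by
    intro t
    ext x
    simp only [hB, Set.mem_setOf_eq, Set.mem_iUnion]
    constructor
    · intro h
      obtain ⟨j, hj⟩ := exists_eq_ciInf_of_finite (f := fun j => x j)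
      exact ⟨j, by rw [hj, le_div_iff₀ hd']; linarith [mul_comm (⨅ j, x j) (d:ℝ)]⟩
    · rintro ⟨j, hj⟩
      have h1 : (⨅ j', x j') ≤ x j :=
        ciInf_le (Set.Finite.bddBelow (Set.finite_range _)) j
      have h2 : (d:ℝ) * (⨅ j', x j') ≤ (d:ℝ) * (t / d) :=
        mul_le_mul_of_nonneg_left (h1.trans hj) hd'.le
      calc (d:ℝ) * ⨅ j', x j' ≤ (d:ℝ) * (t / d) := h2
        _ = t := by field_simp
  have hBmeas : ∀ t, MeasurableSet (B t) := by
    intro t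
    rw [hBeq]
    exact MeasurableSet.iUnion fun j =>
      measurableSet_le (measurable_pi_apply j) measurable_const
  have hBmono : ∀ s t : ℝ, s ≤ t → B s ⊆ B t := fun s t hst x hx => le_trans hx hst
  have hfq : ∀ (i : Fin k) (t : ℝ) (ω : Ω), f i ω ∈ B t ↔ q i ω ≤ t := by
    intro i t ω
    simp only [hB, Set.mem_setOf_eq, hq, hf]
  -- single-step bound
  have hstep : ∀ (i : Fin k) (t : ℝ), 0 ≤ t → μ {ω | q i ω ≤ t} ≤ ENNReal.ofReal t := by
    intro i t ht
    rcases le_or_gt t 1 with ht1 | ht1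
    · have hsub : {ω | q i ω ≤ t} ⊆ ⋃ j : Fin d, {ω | p i j ω ≤ t / d} := by
        intro ω hω
        have : f i ω ∈ B t := (hfq i t ω).mpr hω
        rw [hBeq] at this
        obtain ⟨j, hj⟩ := Set.mem_iUnion.mp this
        exact Set.mem_iUnion.mpr ⟨j, hj⟩
      have htd : t / d ∈ Set.Icc (0:ℝ) 1 := by
        refine ⟨div_nonneg ht hd'.le, ?_⟩
        rw [div_le_one hd']
        exact ht1.trans (by exact_mod_cast Nat.one_le_iff_ne_zero.mpr hd.ne')
      calc μ {ω | q i ω ≤ t} ≤ ∑' j : Fin d, μ {ω | p i j ω ≤ t / d} :=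
            le_trans (measure_mono hsub) (measure_iUnion_le _)
        _ = ∑ j : Fin d, μ {ω | p i j ω ≤ t / d} := tsum_fintype _
        _ ≤ ∑ _j : Fin d, ENNReal.ofReal (t / d) :=
            Finset.sum_le_sum fun j _ => hsuper i j _ htd
        _ = (d : ENNReal) * ENNReal.ofReal (t / d) := by
            rw [Finset.sum_const, Finset.card_univ, Fintype.card_fin, nsmul_eq_mul]
        _ = ENNReal.ofReal ((d:ℝ) * (t / d)) := by
            rw [ENNReal.ofReal_mul (by positivity), ENNReal.ofReal_natCast]
        _ = ENNReal.ofReal t := by rw [mul_div_cancel₀ _ hd'.ne']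
    · calc μ {ω | q i ω ≤ t} ≤ 1 := prob_le_one
        _ = ENNReal.ofReal 1 := ENNReal.ofReal_one.symm
        _ ≤ ENNReal.ofReal t := ENNReal.ofReal_le_ofReal ht1.le
  -- events
  set F : Fin k → Set Ω := fun i => f i ⁻¹' B (β i) with hFdef
  set C : Fin k → Set Ω := fun i => f i ⁻¹' (B (γ + β i) \ B (β i)) with hCdef
  have hFeq : ∀ i, F i = {ω | q i ω ≤ β i} := by
    intro i; ext ω; simpa [hFdef] using hfq i (β i) ω
  have hCeq : ∀ i, C i = {ω | β i < q i ω ∧ q i ω ≤ γ + β i} := by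
    intro i; ext ω
    simp only [hCdef, Set.mem_preimage, Set.mem_diff, Set.mem_setOf_eq, hfq, not_le]
    tauto
  have hFCunion : ∀ i, F i ∪ C i = {ω | q i ω ≤ γ + β i} := by
    intro i
    rw [hFeq, hCeq]
    ext ω
    simp only [Set.mem_union, Set.mem_setOf_eq]
    constructor
    · rintro (h | h)
      · linarith [hγpos]
      · exact h.2
    · intro h
      by_cases h' : q i ω ≤ β i
      · exact Or.inl h'
      · exact Or.inr ⟨lt_of_not_ge h', h⟩
  have hFCdisj : ∀ i, Disjoint (F i) (C i) := by
    intro i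
    rw [hFeq, hCeq]
    rw [Set.disjoint_left]
    intro ω h1 h2
    exact absurd h1 (not_le.mpr h2.1)
  have hCmeasSet : ∀ i, MeasurableSet (C i) :=
    fun i => (hfmeas i) ((hBmeas _).diff (hBmeas _))
  -- comap measurability
  have hFcomap : ∀ i : Fin k,
      MeasurableSet[MeasurableSpace.comap (f i) inferInstance] (F i) :=
    fun i => ⟨B (β i), hBmeas _, rfl⟩
  have hCcomap : ∀ i : Fin k,
      MeasurableSet[MeasurableSpace.comap (f i) inferInstance] (C i) :=
    fun i => ⟨B (γ + β i) \ B (β i), (hBmeas _).diff (hBmeas _), rfl⟩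
  -- events A i
  set A : Fin k → Set Ω := fun i => F i ∩ ⋂ j ∈ Finset.Iio i, C j with hA
  have hfailsub : seqFail k q β γ ⊆ ⋃ i, A i := by
    rintro ω ⟨i, hreach, hfail⟩
    refine Set.mem_iUnion.mpr ⟨i, ?_, ?_⟩
    · rw [hFeq]; exact hfail
    · refine Set.mem_biInter fun j hj => ?_
      rw [hCeq]
      exact hreach j (Finset.mem_Iio.mp hj)
  -- factorization
  have hAfac : ∀ i : Fin k, μ (A i) = μ (F i) * ∏ j ∈ Finset.Iio i, μ (C j) := by
    intro i
    set s : Fin k → Set Ω := fun j => if j < i then C j else F j with hs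
    have hmem : ∀ j ∈ insert i (Finset.Iio i),
        MeasurableSet[MeasurableSpace.comap (f j) inferInstance] (s j) := by
      intro j _
      by_cases hj : j < i
      · simpa [hs, hj] using hCcomap j
      · simpa [hs, hj] using hFcomap j
    have hfac := hindep.meas_biInter (S := insert i (Finset.Iio i)) hmem
    have hAeq : A i = ⋂ j ∈ insert i (Finset.Iio i), s j := by
      ext ω
      simp only [hA, Set.mem_inter_iff, Set.mem_iInter, Finset.mem_insert, Finset.mem_Iio, hs]
      constructor
      · rintro ⟨hF, hC⟩ j hj
        rcases hj with rfl | hj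
        · simpa [lt_irrefl] using hF
        · simpa [hj] using hC j hj
      · intro h
        exact ⟨by simpa [lt_irrefl] using h i (Or.inl rfl),
          fun j hj => by simpa [hj] using h j (Or.inr hj)⟩
    rw [hAeq, hfac, Finset.prod_insert (by simp : i ∉ Finset.Iio i)]
    have hsi : μ (s i) = μ (F i) := by simp [hs]
    rw [hsi]
    congr 1
    exact Finset.prod_congr rfl fun j hj => by simp [hs, Finset.mem_Iio.mp hj]
  -- real-valued sequences
  set a : ℕ → ℝ := fun m => if h : m < k then (μ (F ⟨m, h⟩)).toReal else 0 with ha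
  set b : ℕ → ℝ := fun m => if h : m < k then (μ (C ⟨m, h⟩)).toReal else 0 with hb
  have ha0 : ∀ m, 0 ≤ a m := by
    intro m; simp only [ha]; split <;> simp [ENNReal.toReal_nonneg]
  have hb0 : ∀ m, 0 ≤ b m := by
    intro m; simp only [hb]; split <;> simp [ENNReal.toReal_nonneg]
  have haval : ∀ i : Fin k, a i.val = (μ (F i)).toReal := by
    intro i; rw [ha]; simp [i.isLt]
  have hbval : ∀ i : Fin k, b i.val = (μ (C i)).toReal := by
    intro i; rw [hb]; simp [i.isLt]
  have hFCtoReal : ∀ i : Fin k,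
      (μ (F i)).toReal + (μ (C i)).toReal = (μ {ω | q i ω ≤ γ + β i}).toReal := by
    intro i
    rw [← ENNReal.toReal_add (measure_ne_top _ _) (measure_ne_top _ _),
      ← measure_union (hFCdisj i) (hCmeasSet i), hFCunion]
  have haβ : ∀ m, a m ≤ β m := by
    intro m
    simp only [ha]
    split
    · rename_i h
      have := hstep ⟨m, h⟩ (β m) (hβpos m).le
      rw [← hFeq] at this
      exact ENNReal.toReal_le_of_le_ofReal (hβpos m).le this
    · exact (hβpos m).le
  have hab1 : ∀ m, a m + b m ≤ 1 := by
    intro m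
    by_cases h : m < k
    · have := hFCtoReal ⟨m, h⟩
      rw [haval ⟨m, h⟩, hbval ⟨m, h⟩]  -- note: a m with m = (⟨m,h⟩ : Fin k).val
      rw [this]
      exact ENNReal.toReal_le_of_le_ofReal zero_le_one (by simpa using prob_le_one)
    · simp [ha, hb, h]
  have habγ : ∀ m, a m + b m ≤ γ + β m := by
    intro m
    by_cases h : m < k
    · have hγβ : (0:ℝ) ≤ γ + β m := by have := hβpos m; linarith
      have h2 := hstep ⟨m, h⟩ (γ + β m) hγβ
      rw [haval ⟨m, h⟩, hbval ⟨m, h⟩, hFCtoReal ⟨m, h⟩]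
      exact ENNReal.toReal_le_of_le_ofReal hγβ h2
    · have : (0:ℝ) < γ + β m := by have := hβpos m; linarith
      simp only [ha, hb, dif_neg h]
      linarith
  -- arithmetic bound
  have harith := (seq_arith β γ hγpos hrec a b ha0 hb0 haβ hab1 habγ k 0).1
  simp only [zero_add] at harith
  have hk0 : (k:ℝ) * β 0 = α := by
    rw [hβ]; field_simp
  rw [hk0] at harith
  -- product over Iio i equals product over range i.val
  have hprod : ∀ i : Fin k,
      ∏ j ∈ Finset.Iio i, (μ (C j)).toReal = ∏ j ∈ Finset.range i.val, b j := by
    intro i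
    refine Finset.prod_bij' (fun j _ => (j : ℕ))
      (fun m hm => (⟨m, lt_trans (Finset.mem_range.mp hm) i.isLt⟩ : Fin k))
      (fun j hj => ?_) (fun m hm => ?_) (fun j hj => ?_) (fun m hm => ?_) (fun j hj => ?_)
    · simp only [Finset.mem_range]
      exact Fin.lt_def.mp (Finset.mem_Iio.mp hj)
    · simp only [Finset.mem_Iio]
      exact Fin.lt_def.mpr (by simpa using Finset.mem_range.mp hm)
    · simp
    · simp
    · exact (hbval j).symm
  -- assemble
  have hAval : ∀ i : Fin k,
      μ (A i) = ENNReal.ofReal (a i.val * ∏ j ∈ Finset.range i.val, b j) := by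
    intro i
    have hne : μ (F i) * ∏ j ∈ Finset.Iio i, μ (C j) ≠ ⊤ :=
      ENNReal.mul_ne_top (measure_ne_top _ _)
        (ENNReal.prod_ne_top fun j _ => measure_ne_top _ _)
    rw [hAfac i, ← ENNReal.ofReal_toReal hne, ENNReal.toReal_mul, ENNReal.toReal_prod,
      haval i, hprod i]
  calc μ (seqFail k q β γ) ≤ μ (⋃ i, A i) := measure_mono hfailsub
    _ ≤ ∑' i : Fin k, μ (A i) := measure_iUnion_le _
    _ = ∑ i : Fin k, μ (A i) := tsum_fintype _
    _ = ∑ i : Fin k, ENNReal.ofReal (a i.val * ∏ j ∈ Finset.range i.val, b j) := by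
        exact Finset.sum_congr rfl fun i _ => hAval i
    _ = ENNReal.ofReal (∑ i : Fin k, a i.val * ∏ j ∈ Finset.range i.val, b j) := by
        rw [ENNReal.ofReal_sum_of_nonneg]
        intro i _
        exact mul_nonneg (ha0 _) (Finset.prod_nonneg fun j _ => hb0 _)
    _ = ENNReal.ofReal (∑ i ∈ Finset.range k, a i * ∏ j ∈ Finset.range i, b j) := by
        rw [Fin.sum_univ_eq_sum_range (fun i => a i * ∏ j ∈ Finset.range i, b j) k]
    _ ≤ ENNReal.ofReal α := ENNReal.ofReal_le_ofReal harith
end
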